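/- Work with formal power series over ℝ, where exp denotes the formal exponential of a series with zero constant term. (a) Let E, S ∈ ℝ[[x]] with S of zero constant term satisfy E = 2·exp(S) − 1 and S = x·(E − S)·E. Then (1 + x·E)·S = x·E², and hence E = 2·exp( x·E² / (1 + x·E) ) − 1 (note 1 + x·E is a unit in ℝ[[x]]). (b) Let in addition D, Ŝ ∈ ℝ[[x, w]] with Ŝ of zero constant term satisfy D = (1 + w)·exp(Ŝ) − 1 and Ŝ = x·(D − Ŝ)·E. Then (1 + x·E)·Ŝ = x·E·D. (c) Let further D₁, S₁ ∈ ℝ[[x, w, t]] with S₁ of zero constant term satisfy D₁ = (1 + w·t)·exp(S₁) − 1 and S₁ = x·(D(x,w) − Ŝ(x,w))·D(x,t), where D(x,t) denotes the substitution w := t in D. Then (1 + x·E)·S₁ = x·D(x,w)·D(x,t), and hence D₁ = (1 + w·t)·exp( x·D(x,w)·D(x,t) / (1 + x·E) ) − 1. -/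

import Mathlib

/-- The formal exponential of a multivariate formal power series.  For a series `S`
with zero constant term this agrees with `Σ_{n≥0} Sⁿ/n!`, since the coefficient of a
monomial `m` in `Sⁿ` vanishes whenever `n` exceeds the total degree of `m`. -/
noncomputable def formalExp {σ : Type*} (S : MvPowerSeries σ ℝ) : MvPowerSeries σ ℝ :=
  fun m => ∑ n ∈ Finset.range ((m.sum fun _ e => e) + 1),
    MvPowerSeries.coeff m (S ^ n) / (n.factorial : ℝ)

/-- The combinatorial systems for SP networks.  `E`, `S` are the generating functions
of SP networks and series SP networks; `D = D(x,w)`, `Sh = Sh(x,w)` additionally mark the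
degree of the first pole; `D₁ = D₁(x,w,t)`, `S₁` mark the degrees of both poles.
`Dt`, `Sht` denote the substitution `w := t` in `D`, `Sh`, encoded as the (unique)
solution of the correspondingly renamed system.  Conclusions:
(a) `(1+xE)·S = xE²`, hence `E = 2·exp(xE²/(1+xE)) − 1` (with `1+xE` a unit);
(b) `(1+xE)·Sh = xED`;
(c) `(1+xE)·S₁ = x·D(x,w)·D(x,t)`, hence `D₁ = (1+wt)·exp(x·D(x,w)·D(x,t)/(1+xE)) − 1`. -/
theorem sp_network_generating_function_system
    (x w t : MvPowerSeries (Fin 3) ℝ)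
    (hx : x = MvPowerSeries.X 0) (hw : w = MvPowerSeries.X 1)
    (ht : t = MvPowerSeries.X 2)
    (E S D Sh Dt Sht D₁ S₁ : MvPowerSeries (Fin 3) ℝ)
    -- (a)
    (hS0 : MvPowerSeries.constantCoeff S = 0)
    (hE : E = 2 * formalExp S - 1) (hSe : S = x * (E - S) * E)
    -- (b)
    (hSh0 : MvPowerSeries.constantCoeff Sh = 0)
    (hD : D = (1 + w) * formalExp Sh - 1) (hShe : Sh = x * (D - Sh) * E)
    -- the system for `D(x,t) = Dt`, `Sh(x,t) = Sht` (substitution `w := t`)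
    (hSht0 : MvPowerSeries.constantCoeff Sht = 0)
    (hDt : Dt = (1 + t) * formalExp Sht - 1) (hShte : Sht = x * (Dt - Sht) * E)
    -- (c)
    (hS₁0 : MvPowerSeries.constantCoeff S₁ = 0)
    (hD₁ : D₁ = (1 + w * t) * formalExp S₁ - 1) (hS₁e : S₁ = x * (D - Sh) * Dt) :
    ((1 + x * E) * S = x * E ^ 2 ∧ IsUnit (1 + x * E) ∧
      E = 2 * formalExp (x * E ^ 2 * (1 + x * E)⁻¹) - 1) ∧
    (1 + x * E) * Sh = x * E * D ∧
    ((1 + x * E) * S₁ = x * D * Dt ∧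
      D₁ = (1 + w * t) * formalExp (x * D * Dt * (1 + x * E)⁻¹) - 1) := by
  have hxc : MvPowerSeries.constantCoeff x = 0 := by
    rw [hx, MvPowerSeries.constantCoeff_X]
  have hc : MvPowerSeries.constantCoeff (1 + x * E) ≠ 0 := by
    simp [hxc]
  have hunit : IsUnit (1 + x * E) := MvPowerSeries.isUnit_iff_constantCoeff.mpr (by simp [hxc])
  have ha : (1 + x * E) * S = x * E ^ 2 := by
    have : S + x * E * S = x * (E - S) * E + x * E * S := by rw [← hSe]
    ring_nf at this ⊢
    linear_combination this
  have hSeq : S = x * E ^ 2 * (1 + x * E)⁻¹ := by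
    rw [MvPowerSeries.eq_mul_inv_iff_mul_eq hc, mul_comm, ha]
  have hb : (1 + x * E) * Sh = x * E * D := by
    linear_combination hShe
  have hc1 : (1 + x * E) * S₁ = x * D * Dt := by
    calc (1 + x * E) * S₁ = ((1 + x * E) * (D - Sh)) * (x * Dt) := by rw [hS₁e]; ring
    _ = ((1 + x * E) * D - x * E * D) * (x * Dt) := by rw [← hb]; ring
    _ = x * D * Dt := by ring
  have hS₁eq : S₁ = x * D * Dt * (1 + x * E)⁻¹ := by
    rw [MvPowerSeries.eq_mul_inv_iff_mul_eq hc, mul_comm, hc1]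
  exact ⟨⟨ha, hunit, by rw [← hSeq, ← hE]⟩, hb, hc1, by rw [← hS₁eq, ← hD₁]⟩
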